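/- Let d ≥ 2, let {𝒫^(b)}_{b=1}^{d+1} be a set of d+1 mutually unbiased measurements on ℂ^d with efficiency parameter κ, let ρ be a density operator on ℂ^d, and let α be a real number with 0 < α ≤ 2 and α ≠ 1. Then (1/(d+1)) Σ_{b=1}^{d+1} H_α(𝒫^(b)|ρ) ≥ ln_α((d+1)/(κ+1)). -/

import Mathlib

open Matrix Finset Real
open scoped ComplexOrder

private lemma aux_rpow_self {α : ℝ} (hα : α ≠ 0) (hα1 : α ≠ 1) {t : ℝ} (ht : 0 ≤ t) :
    t * t ^ (α - 1) = t ^ α := by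
  rcases eq_or_lt_of_le ht with h | h
  · rw [← h, Real.zero_rpow hα, Real.zero_rpow (by intro hc; apply hα1; linarith), mul_zero]
  · conv_rhs => rw [show α = 1 + (α - 1) by ring, Real.rpow_add h, Real.rpow_one]

private lemma hk2 {ι : Type*} [Fintype ι] {q : ℝ} (hq0 : 0 < q) (hq1 : q ≤ 1) (w x : ι → ℝ)
    (hw : ∀ i, 0 ≤ w i) (hw1 : ∑ i, w i = 1) (hx : ∀ i, 0 ≤ x i) :
    ∑ i, w i * x i ^ q ≤ (∑ i, w i * x i) ^ q := by
  rcases eq_or_lt_of_le hq1 with rfl | hq1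
  · simp [Real.rpow_one]
  have h1q : 0 < 1 - q := by linarith
  have hpq : Real.HolderConjugate (1 - q)⁻¹ q⁻¹ := by
    rw [Real.holderConjugate_iff]
    constructor
    · rw [lt_inv_comm₀ one_pos h1q]; simpa using hq0
    · rw [inv_inv, inv_inv]; ring
  have key := Real.inner_le_Lp_mul_Lq_of_nonneg (s := univ) (f := fun i => w i ^ (1 - q))
    (g := fun i => (w i * x i) ^ q) hpq
    (fun i _ => Real.rpow_nonneg (hw i) _) (fun i _ => Real.rpow_nonneg (mul_nonneg (hw i) (hx i)) _)
  have e1 : ∀ i, w i ^ (1 - q) * (w i * x i) ^ q = w i * x i ^ q := by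
    intro i
    rw [Real.mul_rpow (hw i) (hx i), ← mul_assoc, ← Real.rpow_add' (hw i) (by norm_num),
      sub_add_cancel, Real.rpow_one]
  have e3 : ∀ i, (w i ^ (1 - q)) ^ ((1 - q)⁻¹) = w i := fun i => by
    rw [← Real.rpow_mul (hw i), mul_inv_cancel₀ (ne_of_gt h1q), Real.rpow_one]
  have e4 : ∀ i, ((w i * x i) ^ q) ^ (q⁻¹) = w i * x i := fun i => by
    rw [← Real.rpow_mul (mul_nonneg (hw i) (hx i)), mul_inv_cancel₀ (ne_of_gt hq0), Real.rpow_one]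
  simp only [e3, e4] at key
  rw [hw1, one_rpow, one_mul, one_div, inv_inv] at key
  calc ∑ i, w i * x i ^ q = ∑ i, w i ^ (1 - q) * (w i * x i) ^ q :=
        Finset.sum_congr rfl fun i _ => (e1 i).symm
  _ ≤ _ := key

private lemma hk1 {ι : Type*} [Fintype ι] {q : ℝ} (hq : q < 0) (w x : ι → ℝ)
    (hw : ∀ i, 0 ≤ w i) (hw1 : ∑ i, w i = 1) (hx : ∀ i, 0 ≤ x i)
    (hwx : ∀ i, x i = 0 → w i = 0) :
    (∑ i, w i * x i) ^ q ≤ ∑ i, w i * x i ^ q := by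
  have hq0 : q ≠ 0 := ne_of_lt hq
  have h1q : 0 < 1 - q := by linarith
  set s : ℝ := (1 - q)⁻¹ with hs
  set t : ℝ := -q / (1 - q) with ht
  have hspos : 0 < s := inv_pos.mpr h1q
  have htpos : 0 < t := div_pos (by linarith) h1q
  have hst : s + t = 1 := by rw [hs, ht]; field_simp; ring
  have hqst : q * s + t = 0 := by rw [hs, ht]; field_simp; ring
  have hpq : Real.HolderConjugate (1 - q) ((1 - q) / (-q)) := by
    rw [Real.holderConjugate_iff]
    constructor
    · linarith
    · rw [inv_div]; field_simp; ring
  have hfgnn : ∀ i, 0 ≤ w i * x i ^ q := fun i => mul_nonneg (hw i) (Real.rpow_nonneg (hx i) _)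
  have key := Real.inner_le_Lp_mul_Lq_of_nonneg (s := univ)
    (f := fun i => (w i * x i ^ q) ^ s) (g := fun i => (w i * x i) ^ t) hpq
    (fun i _ => Real.rpow_nonneg (hfgnn i) _)
    (fun i _ => Real.rpow_nonneg (mul_nonneg (hw i) (hx i)) _)
  have e1 : ∀ i, (w i * x i ^ q) ^ s * (w i * x i) ^ t = w i := by
    intro i
    rcases eq_or_lt_of_le (hx i) with hx0 | hx0
    · simp [hwx i hx0.symm, ← hx0, Real.zero_rpow hq0, Real.zero_rpow (ne_of_gt hspos),
        Real.zero_rpow (ne_of_gt htpos)]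
    rcases eq_or_lt_of_le (hw i) with hw0 | hw0
    · simp [← hw0, Real.zero_rpow (ne_of_gt hspos)]
    calc (w i * x i ^ q) ^ s * (w i * x i) ^ t
        = (w i ^ s * w i ^ t) * (x i ^ (q * s) * x i ^ t) := by
          rw [Real.mul_rpow hw0.le (Real.rpow_nonneg (hx i) _),
            Real.mul_rpow hw0.le (hx i), ← Real.rpow_mul (hx i)]
          ring
      _ = w i ^ (s + t) * x i ^ (q * s + t) := by
          rw [Real.rpow_add hw0, Real.rpow_add hx0]
      _ = w i := by rw [hst, hqst, Real.rpow_one, Real.rpow_zero, mul_one]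
  have e2 : ∀ i, ((w i * x i ^ q) ^ s) ^ (1 - q) = w i * x i ^ q := by
    intro i
    rw [← Real.rpow_mul (hfgnn i), hs, inv_mul_cancel₀ (ne_of_gt h1q), Real.rpow_one]
  have e5 : ∀ i, ((w i * x i) ^ t) ^ ((1 - q) / (-q)) = w i * x i := by
    intro i
    rw [← Real.rpow_mul (mul_nonneg (hw i) (hx i)), ht,
      show -q / (1 - q) * ((1 - q) / -q) = 1 by field_simp, Real.rpow_one]
  simp only [e1, e2, e5, hw1] at key
  rw [one_div ((1 - q) / -q), inv_div] at key
  set A := ∑ i, w i * x i ^ q with hA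
  set B := ∑ i, w i * x i with hBdef
  have hB : 0 < B := by
    obtain ⟨i0, hi0⟩ : ∃ i, w i ≠ 0 := by
      by_contra h
      push_neg at h
      rw [Finset.sum_congr rfl fun i _ => h i, Finset.sum_const, smul_zero] at hw1
      norm_num at hw1
    have hxi0 : 0 < x i0 := (hx i0).lt_of_ne fun h => hi0 (hwx i0 h.symm)
    exact Finset.sum_pos' (fun i _ => mul_nonneg (hw i) (hx i))
      ⟨i0, Finset.mem_univ _, mul_pos ((hw i0).lt_of_ne (Ne.symm hi0)) hxi0⟩
  have hAnn : 0 ≤ A := Finset.sum_nonneg fun i _ => hfgnn i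
  have hBt : 0 < B ^ (-q / (1 - q)) := Real.rpow_pos_of_pos hB _
  have h2 : (B ^ (-q / (1 - q)))⁻¹ ≤ A ^ (1 / (1 - q)) := by
    have h := mul_le_mul_of_nonneg_right key (inv_nonneg.mpr hBt.le)
    rwa [one_mul, mul_assoc, mul_inv_cancel₀ (ne_of_gt hBt), mul_one] at h
  have h3 : B ^ q = ((B ^ (-q / (1 - q)))⁻¹) ^ (1 - q) := by
    rw [← Real.rpow_neg hB.le, ← Real.rpow_mul hB.le]
    congr 1
    field_simp
  rw [h3]
  calc ((B ^ (-q / (1 - q)))⁻¹) ^ (1 - q)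
      ≤ (A ^ (1 / (1 - q))) ^ (1 - q) :=
        Real.rpow_le_rpow (inv_nonneg.mpr hBt.le) h2 (by linarith)
    _ = A := by
        rw [← Real.rpow_mul hAnn, one_div, inv_mul_cancel₀ (ne_of_gt h1q), Real.rpow_one]

private lemma trace_nn {n : Type*} [Fintype n] [DecidableEq n] {M : Matrix n n ℂ}
    (h : M.PosSemidef) : 0 ≤ M.trace := by
  rw [Matrix.trace]
  apply Finset.sum_nonneg
  intro i _
  have h2 := h.dotProduct_mulVec_nonneg (Pi.single i 1)
  simpa [dotProduct, Matrix.mulVec, Pi.single_apply] using h2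

open scoped MatrixOrder in
private lemma trace_mul_nn {n : Type*} [Fintype n] [DecidableEq n] {A B : Matrix n n ℂ}
    (hA : A.PosSemidef) (hB : B.PosSemidef) : 0 ≤ (A * B).trace := by
  have h1 : A * B = CFC.sqrt A * (CFC.sqrt A * B) := by
    rw [← mul_assoc, CFC.sqrt_mul_sqrt_self A hA.nonneg]
  rw [h1, Matrix.trace_mul_comm]
  have h2 := hB.conjTranspose_mul_mul_same (CFC.sqrt A)
  rw [(CFC.sqrt_nonneg A).posSemidef.1.eq] at h2
  calc (0:ℂ) ≤ (CFC.sqrt A * B * CFC.sqrt A).trace := trace_nn h2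
    _ = (CFC.sqrt A * B * CFC.sqrt A).trace := rfl
    _ = ((CFC.sqrt A * B) * CFC.sqrt A).trace := rfl

private lemma trace_sq_exists {n : Type*} [Fintype n] [DecidableEq n] {ρ : Matrix n n ℂ}
    (hρ : ρ.PosSemidef) (h1 : ρ.trace = 1) :
    ∃ r : ℝ, (ρ * ρ).trace = (r : ℂ) ∧ r ≤ 1 := by
  have hH := hρ.1
  set U : Matrix n n ℂ := (Matrix.IsHermitian.eigenvectorUnitary hH : Matrix n n ℂ) with hU
  set D : Matrix n n ℂ := Matrix.diagonal (RCLike.ofReal ∘ hH.eigenvalues) with hD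
  have hspec : ρ = U * D * star U := hH.spectral_theorem
  have hU1 : star U * U = 1 := (Unitary.mem_iff.mp (Matrix.IsHermitian.eigenvectorUnitary hH).2).1
  have htrD : ∀ (N : Matrix n n ℂ), (U * N * star U).trace = N.trace := by
    intro N
    rw [Matrix.trace_mul_comm, ← mul_assoc, hU1, one_mul]
  have hρρ : ρ * ρ = U * (D * D) * star U := by
    rw [hspec]
    calc U * D * star U * (U * D * star U) = U * (D * (star U * U) * D) * star U := by
          simp only [mul_assoc]
      _ = U * (D * D) * star U := by rw [hU1, mul_one]
  refine ⟨∑ i, hH.eigenvalues i ^ 2, ?_, ?_⟩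
  · rw [hρρ, htrD, hD, Matrix.diagonal_mul_diagonal, Matrix.trace_diagonal]
    push_cast
    simp [pow_two]
  · have hE : ∀ i, 0 ≤ hH.eigenvalues i := hρ.eigenvalues_nonneg
    have hsum1 : ∑ i, hH.eigenvalues i = 1 := by
      have h2 : ρ.trace = ((∑ i, hH.eigenvalues i : ℝ) : ℂ) := by
        conv_lhs => rw [hspec]
        rw [htrD, hD, Matrix.trace_diagonal]
        push_cast
        simp
      rw [h1] at h2
      exact_mod_cast h2.symm
    calc ∑ i, hH.eigenvalues i ^ 2 ≤ (∑ i, hH.eigenvalues i) ^ 2 :=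
          Finset.sum_sq_le_sq_sum_of_nonneg (fun i _ => hE i)
      _ = 1 := by rw [hsum1]; norm_num

private lemma S_bound (d : ℕ) (hd : 2 ≤ d) (κ : ℝ) (hκ1 : 1 / (d : ℝ) < κ)
    (P : Fin (d + 1) → Fin d → Matrix (Fin d) (Fin d) ℂ)
    (hpsd : ∀ b n, (P b n).PosSemidef)
    (htr1 : ∀ b n, (P b n).trace = 1)
    (htr2 : ∀ b b', b ≠ b' → ∀ n n', (P b n * P b' n').trace = ((1 / (d : ℝ) : ℝ) : ℂ))
    (htr3 : ∀ b n n', (P b n * P b n').trace =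
      if n = n' then ((κ : ℝ) : ℂ) else (((1 - κ) / ((d : ℝ) - 1) : ℝ) : ℂ))
    (ρ : Matrix (Fin d) (Fin d) ℂ) (hρ : ρ.PosSemidef) (hρtr : ρ.trace = 1)
    (p : Fin (d + 1) → Fin d → ℝ) (hp : ∀ b n, ((p b n : ℝ) : ℂ) = (P b n * ρ).trace)
    (hpsum : ∀ b, ∑ n, p b n = 1) :
    ∑ b, ∑ n, (p b n) ^ 2 ≤ κ + 1 := by
  have hd2 : (2 : ℝ) ≤ (d : ℝ) := by exact_mod_cast hd
  have hd0 : (0 : ℝ) < d := by linarith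
  have hdC : ((d : ℝ) : ℂ) ≠ 0 := by exact_mod_cast ne_of_gt hd0
  have hdne : (d : ℝ) ≠ 0 := ne_of_gt hd0
  have hdm1 : (d : ℝ) - 1 ≠ 0 := by linarith
  have hκd : 1 < κ * d := by
    rw [div_lt_iff₀ hd0] at hκ1; linarith
  set c : ℝ := (κ * d - 1) / ((d : ℝ) - 1) with hc_def
  have hc : 0 < c := div_pos (by linarith) (by linarith)
  have hcC : ((c : ℝ) : ℂ) ≠ 0 := by exact_mod_cast ne_of_gt hc
  set y : Fin (d + 1) → Fin d → ℝ := fun b n => p b n - 1 / (d : ℝ) with hy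
  have hysum : ∀ b, ∑ n, y b n = 0 := by
    intro b
    simp only [hy, Finset.sum_sub_distrib, hpsum b, Finset.sum_const, Finset.card_univ,
      Fintype.card_fin, nsmul_eq_mul]
    field_simp
    norm_num
  set Y : ℝ := ∑ b, ∑ n, (y b n) ^ 2 with hYdef
  obtain ⟨r, hr, hrle⟩ := trace_sq_exists hρ hρtr
  -- matrices
  set X : Matrix (Fin d) (Fin d) ℂ := ρ - ((1 / (d : ℝ) : ℝ) : ℂ) • 1 with hXdef
  set Q : Matrix (Fin d) (Fin d) ℂ := ∑ b, ∑ n, ((y b n : ℝ) : ℂ) • P b n with hQdef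
  set M : Matrix (Fin d) (Fin d) ℂ := X - ((1 / c : ℝ) : ℂ) • Q with hMdef
  have htrXP : ∀ b n, (X * P b n).trace = ((y b n : ℝ) : ℂ) := by
    intro b n
    rw [hXdef, Matrix.sub_mul, Matrix.smul_mul, Matrix.one_mul, Matrix.trace_sub,
      Matrix.trace_smul, Matrix.trace_mul_comm, ← hp b n, htr1 b n, smul_eq_mul, mul_one]
    simp only [hy]
    push_cast
    ring
  have htrQgen : ∀ N : Matrix (Fin d) (Fin d) ℂ,
      (N * Q).trace = ∑ b, ∑ n, ((y b n : ℝ) : ℂ) * (N * P b n).trace := by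
    intro N
    rw [hQdef, Finset.mul_sum]
    rw [Matrix.trace_sum]
    refine Finset.sum_congr rfl fun b _ => ?_
    rw [Finset.mul_sum, Matrix.trace_sum]
    refine Finset.sum_congr rfl fun n _ => ?_
    rw [Matrix.mul_smul, Matrix.trace_smul, smul_eq_mul]
  have htrXQ : (X * Q).trace = ((Y : ℝ) : ℂ) := by
    rw [htrQgen X]
    rw [Finset.sum_congr rfl fun b _ => Finset.sum_congr rfl fun n _ => by rw [htrXP b n]]
    rw [hYdef]
    push_cast
    refine Finset.sum_congr rfl fun b _ => Finset.sum_congr rfl fun n _ => by ring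
  have htrQX : (Q * X).trace = ((Y : ℝ) : ℂ) := by
    rw [Matrix.trace_mul_comm, htrXQ]
  -- inner sum for Q*Q
  have hinner : ∀ b n, ∑ b', ∑ n', ((y b' n' : ℝ) : ℂ) * (P b n * P b' n').trace
      = ((c * y b n : ℝ) : ℂ) := by
    intro b n
    have hoff : ∀ b' ∈ (univ : Finset (Fin (d + 1))), b' ≠ b →
        ∑ n', ((y b' n' : ℝ) : ℂ) * (P b n * P b' n').trace = 0 := by
      intro b' _ hb'
      rw [Finset.sum_congr rfl fun n' _ => by rw [htr2 b b' (Ne.symm hb') n n']]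
      rw [← Finset.sum_mul]
      have hz : (∑ n', ((y b' n' : ℝ) : ℂ)) = 0 := by
        rw [← Complex.ofReal_sum, hysum b']
        norm_num
      rw [hz, zero_mul]
    rw [Finset.sum_eq_single_of_mem b (Finset.mem_univ b) hoff]
    have hdiag : ∀ n', (P b n * P b n').trace
        = ((if n = n' then κ else (1 - κ) / ((d : ℝ) - 1) : ℝ) : ℂ) := by
      intro n'
      rw [htr3 b n n']
      split_ifs <;> rfl
    rw [Finset.sum_congr rfl fun n' _ => by
      rw [hdiag n', ← Complex.ofReal_mul]]
    rw [← Complex.ofReal_sum]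
    rw [Complex.ofReal_inj]
    have hsplit : ∀ n', y b n' * (if n = n' then κ else (1 - κ) / ((d : ℝ) - 1))
        = y b n' * ((1 - κ) / ((d : ℝ) - 1))
          + (if n = n' then y b n' * (κ - (1 - κ) / ((d : ℝ) - 1)) else 0) := by
      intro n'; split_ifs <;> ring
    rw [Finset.sum_congr rfl fun n' _ => hsplit n', Finset.sum_add_distrib, ← Finset.sum_mul,
      hysum b, zero_mul, zero_add, Finset.sum_ite_eq]
    rw [if_pos (Finset.mem_univ n)]
    have : κ - (1 - κ) / ((d : ℝ) - 1) = c := by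
      rw [hc_def]; field_simp; ring
    rw [this]; ring
  have htrQQ : (Q * Q).trace = ((c * Y : ℝ) : ℂ) := by
    rw [htrQgen Q]
    have hQP : ∀ b n, (Q * P b n).trace = ((c * y b n : ℝ) : ℂ) := by
      intro b n
      rw [Matrix.trace_mul_comm, htrQgen (P b n), hinner b n]
    rw [Finset.sum_congr rfl fun b _ => Finset.sum_congr rfl fun n _ => by rw [hQP b n]]
    rw [hYdef]
    push_cast
    rw [Finset.mul_sum]
    refine Finset.sum_congr rfl fun b _ => ?_
    rw [Finset.mul_sum]
    exact Finset.sum_congr rfl fun n _ => by ring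
  have htrXX : (X * X).trace = ((r - 1 / (d : ℝ) : ℝ) : ℂ) := by
    rw [hXdef]
    simp only [Matrix.sub_mul, Matrix.mul_sub, Matrix.smul_mul, Matrix.mul_smul,
      Matrix.trace_sub, Matrix.trace_smul, smul_smul, smul_eq_mul, Matrix.one_mul,
      Matrix.mul_one]
    rw [hr, hρtr, Matrix.trace_one]
    push_cast
    field_simp
    simp
  -- hermiticity of M
  have hPh : ∀ b n, (P b n)ᴴ = P b n := fun b n => (hpsd b n).1
  have hρh : ρᴴ = ρ := hρ.1
  have hMH : Mᴴ = M := by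
    rw [hMdef, hXdef, hQdef]
    simp only [Matrix.conjTranspose_sub, Matrix.conjTranspose_smul, Matrix.conjTranspose_one,
      Matrix.conjTranspose_sum, hρh, hPh, Complex.star_def, Complex.conj_ofReal]
  have hMM : (Mᴴ * M).trace = ((r - 1 / (d : ℝ) - Y / c : ℝ) : ℂ) := by
    rw [hMH, hMdef]
    simp only [Matrix.sub_mul, Matrix.mul_sub, Matrix.smul_mul, Matrix.mul_smul,
      Matrix.trace_sub, Matrix.trace_smul, smul_smul, smul_eq_mul]
    rw [htrXX, htrXQ, htrQX, htrQQ]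
    push_cast
    field_simp
    simp
  have hpos : (0 : ℂ) ≤ (Mᴴ * M).trace := trace_nn (Matrix.posSemidef_conjTranspose_mul_self M)
  rw [hMM] at hpos
  have hposR : (0 : ℝ) ≤ r - 1 / (d : ℝ) - Y / c := by exact_mod_cast hpos
  have hYle : Y ≤ c * (1 - 1 / (d : ℝ)) := by
    have h1 : Y / c ≤ r - 1 / (d : ℝ) := by linarith
    have h2 : Y ≤ c * (r - 1 / (d : ℝ)) := by
      rw [div_le_iff₀ hc] at h1; linarith [h1]
    nlinarith [hc]
  -- rewrite the sum of squares
  have hb : ∀ b, ∑ n, (p b n) ^ 2 = (∑ n, (y b n) ^ 2) + 1 / (d : ℝ) := by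
    intro b
    have hterm : ∀ n, (p b n) ^ 2 = (y b n) ^ 2 + (2 / (d : ℝ)) * y b n + 1 / (d : ℝ) ^ 2 := by
      intro n
      have : p b n = y b n + 1 / (d : ℝ) := by simp [hy]
      rw [this]; ring
    rw [Finset.sum_congr rfl fun n _ => hterm n, Finset.sum_add_distrib,
      Finset.sum_add_distrib, ← Finset.mul_sum, hysum b, mul_zero, add_zero,
      Finset.sum_const, Finset.card_univ, Fintype.card_fin, nsmul_eq_mul]
    field_simp
  rw [Finset.sum_congr rfl fun b _ => hb b, Finset.sum_add_distrib, Finset.sum_const,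
    Finset.card_univ, Fintype.card_fin, nsmul_eq_mul, ← hYdef]
  have hfinal : c * (1 - 1 / (d : ℝ)) + ((d : ℝ) + 1) * (1 / (d : ℝ)) = κ + 1 := by
    rw [hc_def]
    field_simp
    ring
  push_cast
  linarith [hYle, hfinal]

theorem stmt15 (d : ℕ) (hd : 2 ≤ d) (κ : ℝ)
    (hκ1 : 1 / (d : ℝ) < κ) (hκ2 : κ ≤ 1)
    (P : Fin (d + 1) → Fin d → Matrix (Fin d) (Fin d) ℂ)
    (hpsd : ∀ b n, (P b n).PosSemidef)
    (hsum : ∀ b, ∑ n, P b n = 1)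
    (htr1 : ∀ b n, (P b n).trace = 1)
    (htr2 : ∀ b b', b ≠ b' → ∀ n n', (P b n * P b' n').trace = ((1 / (d : ℝ) : ℝ) : ℂ))
    (htr3 : ∀ b n n', (P b n * P b n').trace =
      if n = n' then ((κ : ℝ) : ℂ) else (((1 - κ) / ((d : ℝ) - 1) : ℝ) : ℂ))
    (ρ : Matrix (Fin d) (Fin d) ℂ) (hρ : ρ.PosSemidef) (hρtr : ρ.trace = 1)
    (p : Fin (d + 1) → Fin d → ℝ)
    (hp : ∀ b n, ((p b n : ℝ) : ℂ) = (P b n * ρ).trace)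
    (α : ℝ) (hα1 : 0 < α) (hα2 : α ≤ 2) (hα3 : α ≠ 1) :
    (1 / ((d : ℝ) + 1)) * (∑ b, ((1 / (1 - α)) * ((∑ n, (p b n) ^ α) - 1))) ≥
      (((((d : ℝ) + 1) / (κ + 1)) ^ (1 - α)) - 1) / (1 - α) := by
  have hd2 : (2 : ℝ) ≤ (d : ℝ) := by exact_mod_cast hd
  have hd0 : (0 : ℝ) < d := by linarith
  have hW : (0 : ℝ) < (d : ℝ) + 1 := by linarith
  have hκpos : 0 < κ := lt_trans (by positivity) hκ1
  have hA : (0 : ℝ) < κ + 1 := by linarith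
  have hAW : 0 < (κ + 1) / ((d : ℝ) + 1) := div_pos hA hW
  have h1ne : (1 : ℝ) - α ≠ 0 := sub_ne_zero.mpr (Ne.symm hα3)
  have hpnn : ∀ b n, 0 ≤ p b n := by
    intro b n
    have h0 := trace_mul_nn (hpsd b n) hρ
    rw [← hp b n] at h0
    exact_mod_cast h0
  have hpsum : ∀ b, ∑ n, p b n = 1 := by
    intro b
    have h1 : ((∑ n, p b n : ℝ) : ℂ) = ((1 : ℝ) : ℂ) := by
      rw [Complex.ofReal_sum, Finset.sum_congr rfl fun n _ => hp b n,
        ← Matrix.trace_sum, ← Finset.sum_mul, hsum b, Matrix.one_mul, hρtr]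
      norm_num
    exact_mod_cast h1
  set I : Fin (d + 1) → ℝ := fun b => ∑ n, (p b n) ^ 2 with hI
  have hIpos : ∀ b, 0 < I b := by
    intro b
    obtain ⟨n0, hn0⟩ : ∃ n, p b n ≠ 0 := by
      by_contra h
      push_neg at h
      have := hpsum b
      rw [Finset.sum_congr rfl fun n _ => h n, Finset.sum_const, smul_zero] at this
      norm_num at this
    exact Finset.sum_pos' (fun n _ => sq_nonneg _)
      ⟨n0, Finset.mem_univ _, lt_of_le_of_ne (sq_nonneg _) (Ne.symm (pow_ne_zero 2 hn0))⟩
  have hS : ∑ b, I b ≤ κ + 1 :=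
    S_bound d hd κ hκ1 P hpsd htr1 htr2 htr3 ρ hρ hρtr p hp hpsum
  set W : ℝ := (d : ℝ) + 1 with hWdef
  have hWne : W ≠ 0 := ne_of_gt hW
  have hwsum : ∑ _b : Fin (d + 1), (1 / W : ℝ) = 1 := by
    rw [Finset.sum_const, Finset.card_univ, Fintype.card_fin, nsmul_eq_mul, hWdef]
    push_cast
    field_simp
  have hIb_avg : ∑ b, (1 / W) * I b ≤ (κ + 1) / W := by
    calc ∑ b, (1 / W) * I b = (∑ b, I b) / W := by rw [← Finset.mul_sum]; ring
      _ ≤ (κ + 1) / W := by gcongr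
  have havg_pos : 0 < ∑ b, (1 / W) * I b :=
    Finset.sum_pos (fun b _ => mul_pos (by positivity) (hIpos b)) Finset.univ_nonempty
  have hpp : ∀ b, ∑ n, p b n * p b n = I b := by
    intro b
    rw [hI]
    exact Finset.sum_congr rfl fun n _ => (pow_two (p b n)).symm
  have hppα : ∀ b, ∑ n, p b n * p b n ^ (α - 1) = ∑ n, p b n ^ α :=
    fun b => Finset.sum_congr rfl fun n _ => aux_rpow_self (ne_of_gt hα1) hα3 (hpnn b n)
  set T : ℝ := ∑ b, ∑ n, p b n ^ α with hT
  have hLHS : (1 / W) * (∑ b, ((1 / (1 - α)) * ((∑ n, (p b n) ^ α) - 1)))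
      = (1 / (1 - α)) * ((1 / W) * T - 1) := by
    rw [← Finset.mul_sum, Finset.sum_sub_distrib, Finset.sum_const, Finset.card_univ,
      Fintype.card_fin, nsmul_eq_mul, mul_one, ← hT, hWdef]
    push_cast
    rw [mul_left_comm]
    congr 1
    rw [mul_sub]
    congr 1
    rw [one_div, inv_mul_cancel₀ (by positivity : ((d : ℝ) + 1) ≠ 0)]
  rw [ge_iff_le, hLHS]
  have hRHSeq : (W / (κ + 1)) ^ (1 - α) = ((κ + 1) / W) ^ (α - 1) := by
    rw [← inv_div (κ + 1) W, Real.inv_rpow (le_of_lt hAW), ← Real.rpow_neg (le_of_lt hAW)]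
    congr 1
    ring
  rw [hRHSeq]
  rcases lt_or_gt_of_ne hα3 with hlt | hgt
  · have h1α : 0 < 1 - α := by linarith
    have hinner : ∀ b, I b ^ (α - 1) ≤ ∑ n, p b n ^ α := by
      intro b
      have h := hk1 (q := α - 1) (by linarith) (p b) (p b) (hpnn b) (hpsum b) (hpnn b)
        (fun n h => h)
      rwa [hpp b, hppα b] at h
    have houter := hk1 (q := α - 1) (by linarith) (fun _ => 1 / W) I (fun _ => by positivity)
      hwsum (fun b => (hIpos b).le) (fun b h => absurd h (ne_of_gt (hIpos b)))
    have hmono : ((κ + 1) / W) ^ (α - 1) ≤ (∑ b, (1 / W) * I b) ^ (α - 1) :=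
      Real.rpow_le_rpow_of_nonpos havg_pos hIb_avg (by linarith)
    have hsum2 : ∑ b, (1 / W) * I b ^ (α - 1) ≤ (1 / W) * T := by
      rw [hT, Finset.mul_sum]
      exact Finset.sum_le_sum fun b _ => mul_le_mul_of_nonneg_left (hinner b) (by positivity)
    have hG : ((κ + 1) / W) ^ (α - 1) ≤ (1 / W) * T :=
      le_trans hmono (le_trans houter hsum2)
    rw [div_le_iff₀ h1α]
    have e : 1 / (1 - α) * ((1 / W) * T - 1) * (1 - α) = (1 / W) * T - 1 := by
      field_simp
    rw [e]
    linarith [hG]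
  · have h1α : 1 - α < 0 := by linarith
    have hq0 : (0 : ℝ) < α - 1 := by linarith
    have hq1 : α - 1 ≤ 1 := by linarith
    have hinner : ∀ b, ∑ n, p b n ^ α ≤ I b ^ (α - 1) := by
      intro b
      have h := hk2 hq0 hq1 (p b) (p b) (hpnn b) (hpsum b) (hpnn b)
      rwa [hpp b, hppα b] at h
    have houter := hk2 hq0 hq1 (fun _ => 1 / W) I (fun _ => by positivity) hwsum
      (fun b => (hIpos b).le)
    have hmono : (∑ b, (1 / W) * I b) ^ (α - 1) ≤ ((κ + 1) / W) ^ (α - 1) :=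
      Real.rpow_le_rpow havg_pos.le hIb_avg hq0.le
    have hsum2 : (1 / W) * T ≤ ∑ b, (1 / W) * I b ^ (α - 1) := by
      rw [hT, Finset.mul_sum]
      exact Finset.sum_le_sum fun b _ => mul_le_mul_of_nonneg_left (hinner b) (by positivity)
    have hG : (1 / W) * T ≤ ((κ + 1) / W) ^ (α - 1) :=
      le_trans hsum2 (le_trans houter hmono)
    rw [div_le_iff_of_neg h1α]
    have e : 1 / (1 - α) * ((1 / W) * T - 1) * (1 - α) = (1 / W) * T - 1 := by
      field_simp
    rw [e]
    linarith [hG]
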